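/- Assume the Coxeter number h is even. Then there exists a unique ordered partition Π = Π₁ ⊔ Π₂ of the set of simple roots such that (i) for k = 1,2, any two distinct simple roots in Π_k are orthogonal, and (ii) every simple root in Π₂ is orthogonal to the highest root ψ. -/

import Mathlib

open scoped RealInnerProductSpace

/-- Reflection of a real inner product space in the hyperplane orthogonal to `v`,
i.e. the orthogonal reflection fixing `(ℝ ∙ v)ᗮ` and sending `v` to `-v`. -/
noncomputable def rootReflection {V : Type*} [NormedAddCommGroup V] [InnerProductSpace ℝ V]
    [FiniteDimensional ℝ V] (v : V) : V ≃ₗᵢ[ℝ] V :=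
  Submodule.reflection ((ℝ ∙ v)ᗮ)

/-- The orbit of `v` under the cyclic group generated by `σ`. -/
def cyclicOrbit {V : Type*} [NormedAddCommGroup V] [InnerProductSpace ℝ V]
    (σ : V ≃ₗᵢ[ℝ] V) (v : V) : Set V :=
  {x | ∃ m : ℤ, (σ ^ m) v = x}

lemma rootReflection_apply' {V : Type*} [NormedAddCommGroup V] [InnerProductSpace ℝ V]
    [FiniteDimensional ℝ V] (v x : V) :
    rootReflection v x = x - (2 * ⟪v, x⟫ / ⟪v, v⟫) • v := by
  rcases eq_or_ne v 0 with rfl | hv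
  · have hx : ((⊤ : Submodule ℝ V).starProjection x : V) = x :=
      Submodule.starProjection_eq_self_iff.mpr trivial
    simp [rootReflection, Submodule.span_zero_singleton, Submodule.reflection_apply, hx, two_smul]
  · rw [rootReflection, Submodule.reflection_apply, Submodule.starProjection_orthogonal_val,
      Submodule.starProjection_singleton, real_inner_self_eq_norm_sq]
    norm_cast
    match_scalars <;> (try simp only [RCLike.ofReal_real_eq_id, id_eq]) <;> ring

structure GoodRS (V : Type*) [NormedAddCommGroup V] [InnerProductSpace ℝ V]
    [FiniteDimensional ℝ V] (ι : Type*) [Fintype ι] [DecidableEq ι] where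
  Δ : Finset V
  α : ι → V
  ψ : V
  hzero : (0 : V) ∉ Δ
  hrefl : ∀ φ ∈ Δ, ∀ θ ∈ Δ, rootReflection φ θ ∈ Δ
  hint : ∀ φ ∈ Δ, ∀ θ ∈ Δ, ∃ m : ℤ, 2 * ⟪φ, θ⟫ / ⟪φ, φ⟫ = (m : ℝ)
  hlaced : ∀ φ ∈ Δ, ∀ θ ∈ Δ, ‖φ‖ = ‖θ‖
  hirred : ∀ A B : Set V, (Δ : Set V) = A ∪ B → (∀ a ∈ A, ∀ b ∈ B, ⟪a, b⟫ = 0) →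
      A = ∅ ∨ B = ∅
  hα : ∀ i, α i ∈ Δ
  hαind : LinearIndependent ℝ α
  hbase : ∀ φ ∈ Δ, (∃ c : ι → ℕ, φ = ∑ i, (c i : ℝ) • α i) ∨
      (∃ c : ι → ℕ, φ = -∑ i, (c i : ℝ) • α i)
  hψmem : ψ ∈ Δ
  hψhigh : ∀ φ ∈ Δ, ∃ c : ι → ℕ, ψ - φ = ∑ i, (c i : ℝ) • α i

namespace GoodRS

variable {V : Type*} [NormedAddCommGroup V] [InnerProductSpace ℝ V] [FiniteDimensional ℝ V]
variable {ι : Type*} [Fintype ι] [DecidableEq ι]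
variable (R : GoodRS V ι)

lemma root_ne_zero {φ : V} (hφ : φ ∈ R.Δ) : φ ≠ 0 := fun h => R.hzero (h ▸ hφ)

/-- the common squared length of the roots -/
noncomputable def cc : ℝ := ⟪R.ψ, R.ψ⟫

lemma cc_pos : 0 < R.cc := by
  have h := norm_pos_iff.mpr (R.root_ne_zero R.hψmem)
  rw [cc, real_inner_self_eq_norm_sq]
  positivity

lemma inner_self {φ : V} (hφ : φ ∈ R.Δ) : ⟪φ, φ⟫ = R.cc := by
  rw [cc, real_inner_self_eq_norm_sq, real_inner_self_eq_norm_sq,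
    R.hlaced φ hφ R.ψ R.hψmem]

lemma neg_mem {φ : V} (hφ : φ ∈ R.Δ) : -φ ∈ R.Δ := by
  have := R.hrefl φ hφ φ hφ
  rwa [rootReflection_apply', mul_div_assoc, div_self (ne_of_gt (by rw [R.inner_self hφ]; exact R.cc_pos)),
    mul_one, two_smul, sub_add_eq_sub_sub, sub_self, zero_sub] at this

lemma coeff_eq (g h : ι → ℝ) (he : ∑ i, g i • R.α i = ∑ i, h i • R.α i) : g = h := by
  have h0 : ∑ i, (g i - h i) • R.α i = 0 := by
    simp [sub_smul, Finset.sum_sub_distrib, he]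
  have := Fintype.linearIndependent_iff.mp R.hαind (fun i => g i - h i) h0
  funext i
  have h2 := this i
  linarith

lemma single_rep (i : ι) : R.α i = ∑ k, (if k = i then (1:ℝ) else 0) • R.α k := by
  simp [ite_smul]

/-- The key "string" lemma: if two distinct roots have positive inner product,
the inner product is `cc/2` and their difference is a root. -/
lemma sub_mem {φ θ : V} (hφ : φ ∈ R.Δ) (hθ : θ ∈ R.Δ) (hne : φ ≠ θ)
    (hpos : 0 < ⟪θ, φ⟫) : ⟪θ, φ⟫ = R.cc / 2 ∧ φ - θ ∈ R.Δ := by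
  obtain ⟨m, hm⟩ := R.hint θ hθ φ hφ
  have hθθ : ⟪θ, θ⟫ = R.cc := R.inner_self hθ
  have hcc := R.cc_pos
  -- ⟪θ, φ⟫ < cc
  have hlt : ⟪θ, φ⟫ < R.cc := by
    by_contra hge
    push_neg at hge
    have : ⟪φ - θ, φ - θ⟫ = 2 * R.cc - 2 * ⟪θ, φ⟫ := by
      rw [inner_sub_sub_self]
      rw [R.inner_self hφ, hθθ, real_inner_comm φ θ]
      ring
    have h1 : ⟪φ - θ, φ - θ⟫ ≤ 0 := by rw [this]; linarith
    have h2 : φ - θ = 0 := by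
      have := real_inner_self_nonneg (x := φ - θ)
      have : ⟪φ - θ, φ - θ⟫ = 0 := le_antisymm h1 this
      exact inner_self_eq_zero.mp this
    exact hne (sub_eq_zero.mp h2)
  have hm1 : (m : ℝ) = 1 := by
    have h0 : (0:ℝ) < m := by
      rw [← hm, hθθ]
      positivity
    have h2 : (m:ℝ) < 2 := by
      rw [← hm, hθθ]
      rw [div_lt_iff₀ hcc]
      linarith
    have : m = 1 := by
      have h0' : 0 < m := by exact_mod_cast h0
      have h2' : m < 2 := by exact_mod_cast h2
      omega
    exact_mod_cast this
  have hval : ⟪θ, φ⟫ = R.cc / 2 := by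
    rw [hθθ] at hm
    field_simp at hm
    rw [hm1] at hm
    linarith
  refine ⟨hval, ?_⟩
  have hsc : 2 * (R.cc / 2) / R.cc = 1 := by field_simp
  have := R.hrefl θ hθ φ hφ
  rwa [rootReflection_apply', hθθ, hval, hsc, one_smul] at this
lemma alpha_inj : Function.Injective R.α := R.hαind.injective

lemma no_neg_coeff {g : ι → ℝ} {d : ι → ℕ} (k : ι) (hgk : g k < 0)
    (he : ∑ i, g i • R.α i = ∑ i, (d i : ℝ) • R.α i) : False := by
  have h1 : g k = (d k : ℝ) := congrFun (R.coeff_eq g (fun i => (d i : ℝ)) he) k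
  have h2 : (0:ℝ) ≤ (d k : ℝ) := Nat.cast_nonneg _
  linarith

lemma sub_single_rep (j i : ι) :
    R.α j - R.α i = ∑ k, ((if k = j then (1:ℝ) else 0) - if k = i then 1 else 0) • R.α k := by
  simp [sub_smul, Finset.sum_sub_distrib, ite_smul]

lemma inner_simple_nonpos {i j : ι} (hij : i ≠ j) : ⟪R.α i, R.α j⟫ ≤ 0 := by
  by_contra hlt
  push_neg at hlt
  have hne : R.α j ≠ R.α i := fun h => hij (R.alpha_inj h).symm
  obtain ⟨_, hmem⟩ := R.sub_mem (R.hα j) (R.hα i) hne hlt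
  rcases R.hbase _ hmem with ⟨d, hd⟩ | ⟨d, hd⟩
  · refine R.no_neg_coeff (g := fun k => (if k = j then (1:ℝ) else 0) - if k = i then 1 else 0)
      (d := d) i ?_ ?_
    · simp [hij]
    · rw [← R.sub_single_rep j i]; exact hd
  · refine R.no_neg_coeff (g := fun k => (if k = i then (1:ℝ) else 0) - if k = j then 1 else 0)
      (d := d) j ?_ ?_
    · simp [Ne.symm hij]
    · rw [← R.sub_single_rep i j]
      rw [← neg_sub, hd, neg_neg]

lemma inner_simple_cases {i j : ι} (hij : i ≠ j) :
    ⟪R.α i, R.α j⟫ = 0 ∨ ⟪R.α i, R.α j⟫ = -(R.cc / 2) := by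
  rcases eq_or_lt_of_le (R.inner_simple_nonpos hij) with h0 | hlt
  · exact Or.inl h0
  right
  have hneg : -R.α j ∈ R.Δ := R.neg_mem (R.hα j)
  have hpos : 0 < ⟪-R.α j, R.α i⟫ := by
    rw [inner_neg_left]
    have := real_inner_comm (R.α i) (R.α j)
    linarith
  have hne : R.α i ≠ -R.α j := by
    intro h
    have h0 : ∑ k, ((if k = i then (1:ℝ) else 0) + if k = j then 1 else 0) • R.α k = 0 := by
      simp only [add_smul, Finset.sum_add_distrib, ite_smul, zero_smul, one_smul,
        Finset.sum_ite_eq', Finset.mem_univ, if_true]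
      rw [h]; abel
    have := Fintype.linearIndependent_iff.mp R.hαind _ h0 i
    simp [hij] at this
  obtain ⟨hval, _⟩ := R.sub_mem (R.hα i) hneg hne hpos
  rw [inner_neg_left] at hval
  have := real_inner_comm (R.α i) (R.α j)
  linarith

/-- `x` is a nonnegative integral combination of the simple roots. -/
def IsPos (x : V) : Prop := ∃ c : ι → ℕ, x = ∑ i, (c i : ℝ) • R.α i

lemma pos_or_neg {φ : V} (hφ : φ ∈ R.Δ) : R.IsPos φ ∨ R.IsPos (-φ) := by
  rcases R.hbase φ hφ with ⟨c, hc⟩ | ⟨c, hc⟩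
  · exact Or.inl ⟨c, hc⟩
  · exact Or.inr ⟨c, by rw [hc, neg_neg]⟩

lemma not_pos_neg {φ : V} (hφ : φ ∈ R.Δ) (h1 : R.IsPos φ) (h2 : R.IsPos (-φ)) : False := by
  obtain ⟨c, hc⟩ := h1
  obtain ⟨d, hd⟩ := h2
  have h0 : ∑ i, ((c i : ℝ) + d i) • R.α i = 0 := by
    simp only [add_smul, Finset.sum_add_distrib]
    rw [← hc, ← hd]
    abel
  have hz := Fintype.linearIndependent_iff.mp R.hαind _ h0
  have hφ0 : φ = 0 := by
    rw [hc]
    apply Finset.sum_eq_zero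
    intro i _
    have h3 := hz i
    have h4 : (0:ℝ) ≤ (c i : ℝ) := Nat.cast_nonneg _
    have h5 : (0:ℝ) ≤ (d i : ℝ) := Nat.cast_nonneg _
    have : (c i : ℝ) = 0 := by linarith
    rw [this, zero_smul]
  exact R.root_ne_zero hφ hφ0

lemma nonempty_index (R : GoodRS V ι) : Nonempty ι := by
  by_contra h
  rw [not_nonempty_iff] at h
  rcases R.hbase R.ψ R.hψmem with ⟨c, hc⟩ | ⟨c, hc⟩ <;>
    exact R.root_ne_zero R.hψmem (by simpa using hc)

lemma psi_isPos : R.IsPos R.ψ := by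
  obtain ⟨i0⟩ := R.nonempty_index
  obtain ⟨c, hc⟩ := R.hψhigh (R.α i0) (R.hα i0)
  refine ⟨fun k => c k + if k = i0 then 1 else 0, ?_⟩
  have h1 : R.ψ = ∑ i, (c i : ℝ) • R.α i + R.α i0 := by rw [← hc]; abel
  rw [h1]
  rw [show (∑ k, ((c k + if k = i0 then 1 else 0 : ℕ) : ℝ) • R.α k)
      = ∑ k, ((c k : ℝ) • R.α k + (if k = i0 then (1:ℝ) else 0) • R.α k) from
    Finset.sum_congr rfl fun k _ => by push_cast [Nat.cast_ite]; rw [add_smul]]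
  have hlast : ∑ k, (if k = i0 then (1:ℝ) else 0) • R.α k = R.α i0 := by
    simp only [ite_smul, one_smul, zero_smul, Finset.sum_ite_eq', Finset.mem_univ, if_true]
  simp only [Finset.sum_add_distrib, hlast]

/-- the coefficients of the highest root -/
noncomputable def m : ι → ℕ := R.psi_isPos.choose

lemma m_spec : R.ψ = ∑ i, (R.m i : ℝ) • R.α i := R.psi_isPos.choose_spec

lemma inner_psi_expand (k : ι) : ⟪R.α k, R.ψ⟫ = ∑ l, (R.m l : ℝ) * ⟪R.α k, R.α l⟫ := by
  conv_lhs => rw [R.m_spec]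
  rw [inner_sum]
  simp [real_inner_smul_right]

lemma inner_psi_nonneg (i : ι) : 0 ≤ ⟪R.α i, R.ψ⟫ := by
  by_contra h
  push_neg at h
  have hneg : -R.α i ∈ R.Δ := R.neg_mem (R.hα i)
  have hpos : 0 < ⟪-R.α i, R.ψ⟫ := by
    rw [inner_neg_left]
    have := real_inner_comm (R.α i) R.ψ
    linarith
  have hne : R.ψ ≠ -R.α i := by
    intro hEq
    apply R.not_pos_neg R.hψmem R.psi_isPos
    refine ⟨fun k => if k = i then 1 else 0, ?_⟩
    rw [hEq, neg_neg]
    simp [ite_smul]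
  obtain ⟨_, hmem⟩ := R.sub_mem R.hψmem hneg hne hpos
  rw [sub_neg_eq_add] at hmem
  obtain ⟨c, hc⟩ := R.hψhigh _ hmem
  refine R.no_neg_coeff (g := fun k => -(if k = i then (1:ℝ) else 0)) (d := c) i (by simp) ?_
  rw [← hc]
  simp [ite_smul]

lemma inner_psi_half (i : ι) (hne : R.ψ ≠ R.α i) (h : ⟪R.α i, R.ψ⟫ ≠ 0) :
    ⟪R.α i, R.ψ⟫ = R.cc / 2 := by
  have hpos : 0 < ⟪R.α i, R.ψ⟫ := lt_of_le_of_ne (R.inner_psi_nonneg i) (Ne.symm h)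
  obtain ⟨hval, _⟩ := R.sub_mem R.hψmem (R.hα i) hne hpos
  exact hval

lemma descent {φ : V} (hφ : φ ∈ R.Δ) (c : ι → ℕ) (hc : φ = ∑ i, (c i : ℝ) • R.α i)
    (hs : ∀ i, φ ≠ R.α i) :
    ∃ (i : ι) (d : ι → ℕ), φ - R.α i ∈ R.Δ ∧ c i = d i + 1 ∧ (∀ j, j ≠ i → d j = c j) ∧
      φ - R.α i = ∑ k, (d k : ℝ) • R.α k := by
  have hsum : ∑ i, (c i : ℝ) * ⟪R.α i, φ⟫ = R.cc := by
    rw [← R.inner_self hφ]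
    symm
    calc ⟪φ, φ⟫ = ⟪∑ i, (c i : ℝ) • R.α i, φ⟫ := by rw [← hc]
    _ = ∑ i, (c i : ℝ) * ⟪R.α i, φ⟫ := by
        rw [sum_inner]
        exact Finset.sum_congr rfl fun i _ => real_inner_smul_left _ _ _
  have hex : ∃ i, 0 < (c i : ℝ) * ⟪R.α i, φ⟫ := by
    by_contra hno
    push_neg at hno
    have hle : (∑ i, (c i:ℝ) * ⟪R.α i, φ⟫) ≤ 0 :=
      Finset.sum_nonpos (fun i _ => hno i)
    rw [hsum] at hle
    linarith [R.cc_pos]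
  obtain ⟨i, hi⟩ := hex
  have hip : 0 < ⟪R.α i, φ⟫ := by
    rcases lt_trichotomy (⟪R.α i, φ⟫ : ℝ) 0 with hlt | h0 | hgt
    · exfalso
      have hnn : (0:ℝ) ≤ (c i : ℝ) := Nat.cast_nonneg _
      nlinarith
    · rw [h0] at hi; simp at hi
    · exact hgt
  obtain ⟨hval, hmem⟩ := R.sub_mem hφ (R.hα i) (hs i) hip
  rcases R.hbase _ hmem with ⟨d, hd⟩ | ⟨d, hd⟩
  · refine ⟨i, d, hmem, ?_, ?_, hd⟩
    · have he : ∑ k, ((c k : ℝ) - if k = i then 1 else 0) • R.α k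
          = ∑ k, (d k : ℝ) • R.α k := by
        rw [← hd, hc]
        simp [sub_smul, Finset.sum_sub_distrib, ite_smul]
      have hfun := R.coeff_eq _ _ he
      have h1 := congrFun hfun i
      simp at h1
      have : (c i : ℝ) = (d i : ℝ) + 1 := by linarith
      exact_mod_cast this
    · intro j hj
      have he : ∑ k, ((c k : ℝ) - if k = i then 1 else 0) • R.α k
          = ∑ k, (d k : ℝ) • R.α k := by
        rw [← hd, hc]
        simp [sub_smul, Finset.sum_sub_distrib, ite_smul]
      have hfun := R.coeff_eq _ _ he
      have h1 := congrFun hfun j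
      simp only [if_neg hj, sub_zero] at h1
      have : (d j : ℝ) = (c j : ℝ) := by linarith
      exact_mod_cast this
  · exfalso
    have hdd : ∑ k, (d k : ℝ) • R.α k = R.α i - φ := by
      rw [← neg_sub φ (R.α i), hd, neg_neg]
    have h0 : ∑ k, ((c k : ℝ) - (if k = i then 1 else 0) + d k) • R.α k = 0 := by
      simp only [add_smul, sub_smul, Finset.sum_add_distrib, Finset.sum_sub_distrib,
        ite_smul, zero_smul, one_smul, Finset.sum_ite_eq', Finset.mem_univ, if_true]
      rw [← hc, hdd]
      abel
    have hz := Fintype.linearIndependent_iff.mp R.hαind _ h0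
    have hcj : ∀ j, j ≠ i → c j = 0 := by
      intro j hj
      have h1 := hz j
      simp only [if_neg hj] at h1
      have h4 : (0:ℝ) ≤ (c j : ℝ) := Nat.cast_nonneg _
      have h5 : (0:ℝ) ≤ (d j : ℝ) := Nat.cast_nonneg _
      have : (c j : ℝ) = 0 := by linarith
      exact_mod_cast this
    have hci : c i ≤ 1 := by
      have h1 := hz i
      simp at h1
      have h5 : (0:ℝ) ≤ (d i : ℝ) := Nat.cast_nonneg _
      have : (c i : ℝ) ≤ 1 := by linarith
      exact_mod_cast this
    have hphi : φ = (c i : ℝ) • R.α i := by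
      rw [hc]
      rw [Finset.sum_eq_single_of_mem i (Finset.mem_univ i)]
      intro j _ hj
      rw [hcj j hj]
      simp
    rcases Nat.lt_or_ge (c i) 1 with h1 | h1
    · have : c i = 0 := by omega
      rw [this] at hphi
      simp at hphi
      exact R.root_ne_zero hφ hphi
    · have : c i = 1 := by omega
      rw [this] at hphi
      simp at hphi
      exact hs i hphi
lemma support_side (S : Set ι) (hS : ∀ a ∈ S, ∀ b, b ∉ S → ⟪R.α a, R.α b⟫ = 0) :
    ∀ N : ℕ, ∀ φ ∈ R.Δ, ∀ c : ι → ℕ, φ = ∑ i, (c i : ℝ) • R.α i → (∑ i, c i) = N →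
      ((∀ i, c i ≠ 0 → i ∈ S) ∨ (∀ i, c i ≠ 0 → i ∉ S)) := by
  intro N
  induction N using Nat.strong_induction_on with
  | _ N IH =>
    intro φ hφ c hc hN
    by_cases hsimp : ∃ i, φ = R.α i
    · obtain ⟨i, hi⟩ := hsimp
      have hrep : ∑ k, (c k : ℝ) • R.α k = ∑ k, (if k = i then (1:ℝ) else 0) • R.α k := by
        rw [← hc, hi]
        simp [ite_smul]
      have hfun := R.coeff_eq _ _ hrep
      by_cases hiS : i ∈ S
      · left
        intro k hk
        have := congrFun hfun k
        by_cases hki : k = i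
        · rwa [hki]
        · simp only [if_neg hki] at this
          exact absurd (by exact_mod_cast this) hk
      · right
        intro k hk
        have := congrFun hfun k
        by_cases hki : k = i
        · rwa [hki]
        · simp only [if_neg hki] at this
          exact absurd (by exact_mod_cast this) hk
    · push_neg at hsimp
      obtain ⟨i, d, hmem, hci, hdj, hd⟩ := R.descent hφ c hc hsimp
      have hlt : ∑ k, d k < N := by
        have hcd : ∀ k, c k = d k + (if k = i then 1 else 0) := by
          intro k
          by_cases hk : k = i
          · subst hk; rw [hci]; simp
          · rw [hdj k hk]; simp [hk]
        have : ∑ k, c k = (∑ k, d k) + 1 := by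
          rw [Finset.sum_congr rfl (fun k _ => hcd k), Finset.sum_add_distrib]
          simp
        omega
      rcases IH _ hlt _ hmem d hd rfl with hA | hB
      · by_cases hiS : i ∈ S
        · left
          intro k hk
          by_cases hki : k = i
          · rwa [hki]
          · exact hA k (by rw [hdj k hki]; exact hk)
        · exfalso
          have hperp : ⟪φ - R.α i, R.α i⟫ = 0 := by
            rw [hd, sum_inner]
            apply Finset.sum_eq_zero
            intro l _
            rw [real_inner_smul_left]
            by_cases hdl : d l = 0
            · simp [hdl]
            · rw [hS l (hA l hdl) i hiS, mul_zero]
          have hcontra : R.cc = R.cc + R.cc := by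
            have hid : φ = (φ - R.α i) + R.α i := by abel
            calc R.cc = ⟪φ, φ⟫ := (R.inner_self hφ).symm
            _ = ⟪(φ - R.α i) + R.α i, (φ - R.α i) + R.α i⟫ := by rw [← hid]
            _ = ⟪φ - R.α i, φ - R.α i⟫ + 2 * ⟪φ - R.α i, R.α i⟫ + ⟪R.α i, R.α i⟫ :=
                real_inner_add_add_self _ _
            _ = R.cc + R.cc := by
                rw [R.inner_self hmem, R.inner_self (R.hα i), hperp]; ring
          linarith [R.cc_pos]
      · by_cases hiS : i ∈ S
        · exfalso
          have hperp : ⟪φ - R.α i, R.α i⟫ = 0 := by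
            rw [hd, sum_inner]
            apply Finset.sum_eq_zero
            intro l _
            rw [real_inner_smul_left]
            by_cases hdl : d l = 0
            · simp [hdl]
            · rw [real_inner_comm, hS i hiS l (hB l hdl), mul_zero]
          have hcontra : R.cc = R.cc + R.cc := by
            have hid : φ = (φ - R.α i) + R.α i := by abel
            calc R.cc = ⟪φ, φ⟫ := (R.inner_self hφ).symm
            _ = ⟪(φ - R.α i) + R.α i, (φ - R.α i) + R.α i⟫ := by rw [← hid]
            _ = ⟪φ - R.α i, φ - R.α i⟫ + 2 * ⟪φ - R.α i, R.α i⟫ + ⟪R.α i, R.α i⟫ :=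
                real_inner_add_add_self _ _
            _ = R.cc + R.cc := by
                rw [R.inner_self hmem, R.inner_self (R.hα i), hperp]; ring
          linarith [R.cc_pos]
        · right
          intro k hk
          by_cases hki : k = i
          · rwa [hki]
          · exact hB k (by rw [hdj k hki]; exact hk)

lemma connected (S : Set ι) (hS : ∀ a ∈ S, ∀ b, b ∉ S → ⟪R.α a, R.α b⟫ = 0) :
    S = ∅ ∨ S = Set.univ := by
  by_contra hcon
  push_neg at hcon
  obtain ⟨hne, hnu⟩ := hcon
  obtain ⟨s, hsS⟩ := hne
  obtain ⟨t, htS⟩ : ∃ t, t ∉ S := by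
    by_contra hh
    push_neg at hh
    exact hnu (Set.eq_univ_of_forall hh)
  set A : Set V := {x | x ∈ R.Δ ∧ ∃ e : ι → ℝ, (∀ j, j ∉ S → e j = 0) ∧ x = ∑ k, e k • R.α k}
    with hAdef
  set B : Set V := {x | x ∈ R.Δ ∧ ∃ e : ι → ℝ, (∀ j, j ∈ S → e j = 0) ∧ x = ∑ k, e k • R.α k}
    with hBdef
  have hcover : (↑R.Δ : Set V) = A ∪ B := by
    ext x
    constructor
    · intro hx
      have hx' : x ∈ R.Δ := hx
      have key : ∀ c : ι → ℕ, x = ∑ i, (c i : ℝ) • R.α i → x ∈ A ∪ B := by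
        intro c hcx
        rcases R.support_side S hS (∑ i, c i) x hx' c hcx rfl with hA | hB
        · left
          refine ⟨hx', fun k => (c k : ℝ), fun j hj => ?_, hcx⟩
          by_cases h0 : c j = 0
          · simp [h0]
          · exact absurd (hA j h0) hj
        · right
          refine ⟨hx', fun k => (c k : ℝ), fun j hj => ?_, hcx⟩
          by_cases h0 : c j = 0
          · simp [h0]
          · exact absurd hj (hB j h0)
      rcases R.pos_or_neg hx' with ⟨c, hcx⟩ | ⟨c, hcx⟩
      · exact key c hcx
      · have hnx : -x ∈ R.Δ := R.neg_mem hx'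
        have key2 : ∀ c : ι → ℕ, -x = ∑ i, (c i : ℝ) • R.α i → x ∈ A ∪ B := by
          intro c hcx2
          rcases R.support_side S hS (∑ i, c i) (-x) hnx c hcx2 rfl with hA | hB
          · left
            refine ⟨hx', fun k => -(c k : ℝ), fun j hj => ?_, ?_⟩
            · by_cases h0 : c j = 0
              · simp [h0]
              · exact absurd (hA j h0) hj
            · have : x = -∑ i, (c i : ℝ) • R.α i := by rw [← hcx2]; simp
              rw [this, ← Finset.sum_neg_distrib]
              exact Finset.sum_congr rfl fun k _ => by rw [neg_smul]
          · right
            refine ⟨hx', fun k => -(c k : ℝ), fun j hj => ?_, ?_⟩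
            · by_cases h0 : c j = 0
              · simp [h0]
              · exact absurd hj (hB j h0)
            · have : x = -∑ i, (c i : ℝ) • R.α i := by rw [← hcx2]; simp
              rw [this, ← Finset.sum_neg_distrib]
              exact Finset.sum_congr rfl fun k _ => by rw [neg_smul]
        exact key2 c hcx
    · rintro (⟨hx, -⟩ | ⟨hx, -⟩) <;> exact hx
  have horth : ∀ a ∈ A, ∀ b ∈ B, ⟪a, b⟫ = 0 := by
    rintro a ⟨-, e, he, rfl⟩ b ⟨-, f, hf, rfl⟩
    rw [sum_inner]
    apply Finset.sum_eq_zero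
    intro k _
    rw [real_inner_smul_left, inner_sum]
    have : ∀ l ∈ Finset.univ, ⟪R.α k, f l • R.α l⟫ = (0:ℝ) ∨ e k = 0 := by
      intro l _
      by_cases hkS : k ∈ S
      · left
        rw [real_inner_smul_right]
        by_cases hlS : l ∈ S
        · rw [hf l hlS]; ring
        · rw [hS k hkS l hlS, mul_zero]
      · right
        exact he k hkS
    by_cases hkS : k ∈ S
    · have : ∑ l, ⟪R.α k, f l • R.α l⟫ = (0:ℝ) := by
        apply Finset.sum_eq_zero
        intro l hl
        rw [real_inner_smul_right]
        by_cases hlS : l ∈ S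
        · rw [hf l hlS]; ring
        · rw [hS k hkS l hlS, mul_zero]
      rw [this, mul_zero]
    · rw [he k hkS]; ring
  rcases R.hirred A B hcover horth with hA0 | hB0
  · have : R.α s ∈ A := by
      refine ⟨R.hα s, fun k => if k = s then 1 else 0, fun j hj => ?_, ?_⟩
      · have hne2 : j ≠ s := by rintro rfl; exact hj hsS
        simp [hne2]
      · simp [ite_smul]
    rw [hA0] at this
    exact this
  · have : R.α t ∈ B := by
      refine ⟨R.hα t, fun k => if k = t then 1 else 0, fun j hj => ?_, ?_⟩
      · have hne2 : j ≠ t := by rintro rfl; exact htS hj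
        simp [hne2]
      · simp [ite_smul]
    rw [hB0] at this
    exact this

open scoped Classical in
lemma exists_leaf (S : Finset ι) (hS : S.Nonempty) :
    ∃ v ∈ S, (S.filter (fun j => j ≠ v ∧ ⟪R.α v, R.α j⟫ ≠ 0)).card ≤ 1 := by
  by_contra hno
  push_neg at hno
  have hpos : 0 < ⟪∑ i ∈ S, R.α i, ∑ i ∈ S, R.α i⟫ := by
    have hne : (∑ i ∈ S, R.α i) ≠ 0 := by
      intro h0
      have h1 : ∑ i, (if i ∈ S then (1:ℝ) else 0) • R.α i = 0 := by
        have heq : ∑ i, (if i ∈ S then (1:ℝ) else 0) • R.α i = ∑ i ∈ S, R.α i := by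
          simp [ite_smul]
        rw [heq, h0]
      have h2 := Fintype.linearIndependent_iff.mp R.hαind _ h1
      obtain ⟨v, hv⟩ := hS
      have := h2 v
      simp [hv] at this
    have h3 : 0 < ‖∑ i ∈ S, R.α i‖ := norm_pos_iff.mpr hne
    rw [real_inner_self_eq_norm_sq]
    positivity
  have hexp : ⟪∑ i ∈ S, R.α i, ∑ i ∈ S, R.α i⟫ = ∑ i ∈ S, ∑ j ∈ S, ⟪R.α i, R.α j⟫ := by
    rw [sum_inner]
    exact Finset.sum_congr rfl fun i _ => inner_sum _ _ _
  have hrow : ∀ i ∈ S, ∑ j ∈ S, ⟪R.α i, R.α j⟫ ≤ 0 := by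
    intro i hiS
    set T := S.filter (fun j => j ≠ i ∧ ⟪R.α i, R.α j⟫ ≠ 0) with hT
    have hTsub : T ⊆ S.erase i := by
      intro j hj
      rw [Finset.mem_filter] at hj
      exact Finset.mem_erase.mpr ⟨hj.2.1, hj.1⟩
    have hsplit : ∑ j ∈ S, ⟪R.α i, R.α j⟫ = ⟪R.α i, R.α i⟫ + ∑ j ∈ S.erase i, ⟪R.α i, R.α j⟫ := by
      rw [← Finset.add_sum_erase S _ hiS]
    have hzero : ∑ j ∈ S.erase i, ⟪R.α i, R.α j⟫ = ∑ j ∈ T, ⟪R.α i, R.α j⟫ := by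
      symm
      apply Finset.sum_subset hTsub
      intro j hjS hjT
      rw [Finset.mem_erase] at hjS
      by_contra hne0
      exact hjT (Finset.mem_filter.mpr ⟨hjS.2, hjS.1, hne0⟩)
    have hval : ∀ j ∈ T, ⟪R.α i, R.α j⟫ = -(R.cc / 2) := by
      intro j hj
      rw [Finset.mem_filter] at hj
      rcases R.inner_simple_cases (Ne.symm hj.2.1) with h | h
      · exact absurd h hj.2.2
      · exact h
    have hTcard : 2 ≤ T.card := hno i hiS
    have hsumT : ∑ j ∈ T, ⟪R.α i, R.α j⟫ = T.card * (-(R.cc / 2)) := by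
      rw [Finset.sum_congr rfl hval, Finset.sum_const, nsmul_eq_mul]
    have hcc := R.cc_pos
    have hTle : (2:ℝ) ≤ (T.card : ℝ) := by exact_mod_cast hTcard
    rw [hsplit, hzero, hsumT, R.inner_self (R.hα i)]
    nlinarith
  have : ⟪∑ i ∈ S, R.α i, ∑ i ∈ S, R.α i⟫ ≤ 0 := by
    rw [hexp]
    exact Finset.sum_nonpos hrow
  linarith

open scoped Classical in
lemma exists_coloring_aux (n : ℕ) : ∀ S : Finset ι, S.card = n → ∃ f : ι → Bool,
    ∀ i ∈ S, ∀ j ∈ S, i ≠ j → ⟪R.α i, R.α j⟫ ≠ 0 → f i ≠ f j := by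
  induction n using Nat.strong_induction_on with
  | _ n IH =>
    intro S hcard
    rcases Finset.eq_empty_or_nonempty S with rfl | hS
    · exact ⟨fun _ => true, by simp⟩
    obtain ⟨v, hvS, hdeg⟩ := R.exists_leaf S hS
    have hcard' : (S.erase v).card < n := by
      rw [Finset.card_erase_of_mem hvS]
      have : 0 < S.card := Finset.card_pos.mpr hS
      omega
    obtain ⟨f, hf⟩ := IH _ hcard' (S.erase v) rfl
    set T := S.filter (fun j => j ≠ v ∧ ⟪R.α v, R.α j⟫ ≠ 0) with hT
    have key : ∀ b : Bool, (∀ u ∈ T, b ≠ f u) → ∀ i ∈ S, ∀ j ∈ S, i ≠ j →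
        ⟪R.α i, R.α j⟫ ≠ 0 → Function.update f v b i ≠ Function.update f v b j := by
      intro b hb i hiS j hjS hij hinner
      by_cases hiv : i = v
      · subst hiv
        have hjT : j ∈ T := Finset.mem_filter.mpr ⟨hjS, Ne.symm hij, hinner⟩
        rw [Function.update_self, Function.update_of_ne (Ne.symm hij)]
        exact hb j hjT
      · by_cases hjv : j = v
        · subst hjv
          have hiT : i ∈ T := by
            refine Finset.mem_filter.mpr ⟨hiS, hij, ?_⟩
            rw [real_inner_comm]
            exact hinner
          rw [Function.update_self, Function.update_of_ne hiv]
          exact fun hh => (hb i hiT) hh.symm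
        · rw [Function.update_of_ne hiv, Function.update_of_ne hjv]
          exact hf i (Finset.mem_erase.mpr ⟨hiv, hiS⟩) j (Finset.mem_erase.mpr ⟨hjv, hjS⟩)
            hij hinner
    rcases Finset.eq_empty_or_nonempty T with hTe | hTne
    · exact ⟨Function.update f v true, key true (by rw [hTe]; simp)⟩
    · obtain ⟨u, hu⟩ := hTne
      have hTu : T = {u} := by
        apply Finset.eq_singleton_iff_unique_mem.mpr
        refine ⟨hu, fun x hx => ?_⟩
        by_contra hxu
        have : 2 ≤ T.card := Finset.one_lt_card.mpr ⟨x, hx, u, hu, hxu⟩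
        omega
      refine ⟨Function.update f v (!f u), key (!f u) ?_⟩
      intro w hw
      rw [hTu, Finset.mem_singleton] at hw
      subst hw
      exact Bool.not_ne_self _

lemma coloring_unique (f g : ι → Bool)
    (hfp : ∀ i j, i ≠ j → ⟪R.α i, R.α j⟫ ≠ 0 → f i ≠ f j)
    (hgp : ∀ i j, i ≠ j → ⟪R.α i, R.α j⟫ ≠ 0 → g i ≠ g j) :
    (∀ i, f i = g i) ∨ (∀ i, f i = !g i) := by
  have hcl := R.connected {i | f i = g i} ?_
  · rcases hcl with hE | hU
    · right
      intro i
      have : i ∉ ({i | f i = g i} : Set ι) := by rw [hE]; exact Set.notMem_empty i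
      simp only [Set.mem_setOf_eq] at this
      cases hfi : f i <;> cases hgi : g i <;> simp_all
    · left
      intro i
      have : i ∈ ({i | f i = g i} : Set ι) := hU ▸ Set.mem_univ i
      exact this
  · intro a ha b hb
    by_contra hab
    have hne : a ≠ b := by rintro rfl; exact hb ha
    have h1 := hfp a b hne hab
    have h2 := hgp a b hne hab
    apply hb
    simp only [Set.mem_setOf_eq] at ha ⊢
    cases hfa : f a <;> cases hga : g a <;> cases hfb : f b <;> cases hgb : g b <;> simp_all
open scoped Classical in
/-- the neighbours of `k` in the Dynkin diagram -/
noncomputable def nbr (k : ι) : Finset ι :=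
  Finset.univ.filter (fun l => l ≠ k ∧ ⟪R.α k, R.α l⟫ ≠ 0)

lemma mem_nbr {k l : ι} : l ∈ R.nbr k ↔ l ≠ k ∧ ⟪R.α k, R.α l⟫ ≠ 0 := by
  classical
  simp [nbr]

lemma nbr_symm {k l : ι} (h : l ∈ R.nbr k) : k ∈ R.nbr l := by
  rw [mem_nbr] at h ⊢
  refine ⟨h.1.symm, ?_⟩
  rw [real_inner_comm]
  exact h.2

lemma inner_nbr {k l : ι} (h : l ∈ R.nbr k) : ⟪R.α k, R.α l⟫ = -(R.cc / 2) := by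
  rw [mem_nbr] at h
  rcases R.inner_simple_cases (Ne.symm h.1) with h0 | hv
  · exact absurd h0 h.2
  · exact hv

lemma psi_eq (k : ι) :
    ⟪R.α k, R.ψ⟫ = R.cc * R.m k - (R.cc / 2) * ∑ l ∈ R.nbr k, (R.m l : ℝ) := by
  rw [R.inner_psi_expand k]
  rw [← Finset.add_sum_erase _ _ (Finset.mem_univ k)]
  have hsub : R.nbr k ⊆ Finset.univ.erase k := by
    intro l hl
    rw [R.mem_nbr] at hl
    exact Finset.mem_erase.mpr ⟨hl.1, Finset.mem_univ l⟩
  have h2 : ∑ l ∈ Finset.univ.erase k, (R.m l : ℝ) * ⟪R.α k, R.α l⟫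
      = ∑ l ∈ R.nbr k, (R.m l : ℝ) * ⟪R.α k, R.α l⟫ := by
    symm
    apply Finset.sum_subset hsub
    intro x hx hnx
    have h0 : ⟪R.α k, R.α x⟫ = 0 := by
      by_contra hne0
      exact hnx (R.mem_nbr.mpr ⟨(Finset.mem_erase.mp hx).1, hne0⟩)
    rw [h0, mul_zero]
  have h3 : ∑ l ∈ R.nbr k, (R.m l : ℝ) * ⟪R.α k, R.α l⟫
      = ∑ l ∈ R.nbr k, (R.m l : ℝ) * (-(R.cc / 2)) :=
    Finset.sum_congr rfl fun l hl => by rw [R.inner_nbr hl]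
  rw [h2, h3, ← Finset.sum_mul, R.inner_self (R.hα k)]
  ring

lemma m_pos (k : ι) : 1 ≤ R.m k := by
  have hcl := R.connected {k | R.m k ≠ 0} ?_
  · rcases hcl with hE | hU
    · exfalso
      apply R.root_ne_zero R.hψmem
      rw [R.m_spec]
      apply Finset.sum_eq_zero
      intro l _
      have : l ∉ ({k | R.m k ≠ 0} : Set ι) := by rw [hE]; exact Set.notMem_empty l
      simp only [Set.mem_setOf_eq, not_not] at this
      rw [this]
      simp
    · have : k ∈ ({k | R.m k ≠ 0} : Set ι) := hU ▸ Set.mem_univ k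
      simp only [Set.mem_setOf_eq] at this
      omega
  · intro a ha b hb
    simp only [Set.mem_setOf_eq, not_not] at ha hb
    by_contra hab
    -- b has m b = 0; show all its neighbours have m = 0
    have hb0 : (R.m b : ℝ) = 0 := by exact_mod_cast hb
    have heq := R.psi_eq b
    have hge := R.inner_psi_nonneg b
    rw [heq, hb0] at hge
    have hcc := R.cc_pos
    have hsumle : ∑ l ∈ R.nbr b, (R.m l : ℝ) ≤ 0 := by nlinarith
    have hsumge : 0 ≤ ∑ l ∈ R.nbr b, (R.m l : ℝ) :=
      Finset.sum_nonneg fun l _ => Nat.cast_nonneg _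
    have hzero : ∀ l ∈ R.nbr b, (R.m l : ℝ) = 0 := by
      rw [← Finset.sum_eq_zero_iff_of_nonneg (fun l _ => Nat.cast_nonneg _)]
      linarith
    have haB : a ∈ R.nbr b := by
      refine R.mem_nbr.mpr ⟨?_, ?_⟩
      · rintro rfl; exact ha hb
      · rw [real_inner_comm]; exact hab
    have := hzero a haB
    exact ha (by exact_mod_cast this)

lemma psi_ne_simple {i j : ι} (hij : i ≠ j) (hj : ⟪R.α j, R.ψ⟫ ≠ 0) : R.ψ ≠ R.α i := by
  intro hEq
  apply hj
  rw [hEq]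
  have h1 := R.inner_psi_nonneg j
  rw [hEq] at h1
  have h2 := R.inner_simple_nonpos hij
  rw [real_inner_comm] at h2
  linarith

lemma psi_self_expand : R.cc = ∑ k, (R.m k : ℝ) * ⟪R.α k, R.ψ⟫ := by
  rw [cc]
  calc ⟪R.ψ, R.ψ⟫ = ⟪∑ k, (R.m k : ℝ) • R.α k, R.ψ⟫ := by rw [← R.m_spec]
  _ = ∑ k, (R.m k : ℝ) * ⟪R.α k, R.ψ⟫ := by
      rw [sum_inner]
      exact Finset.sum_congr rfl fun k _ => real_inner_smul_left _ _ _

/-- key structure: when two distinct simple roots are non-orthogonal to ψ,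
they have coefficient 1 in ψ and all other simple roots are orthogonal to ψ. -/
lemma two_nbrs {i j : ι} (hij : i ≠ j) (hi : ⟪R.α i, R.ψ⟫ ≠ 0) (hj : ⟪R.α j, R.ψ⟫ ≠ 0) :
    R.m i = 1 ∧ R.m j = 1 ∧ ∀ k, k ≠ i → k ≠ j → ⟪R.α k, R.ψ⟫ = 0 := by
  have hhi : ⟪R.α i, R.ψ⟫ = R.cc / 2 :=
    R.inner_psi_half i (R.psi_ne_simple hij hj) hi
  have hhj : ⟪R.α j, R.ψ⟫ = R.cc / 2 :=
    R.inner_psi_half j (R.psi_ne_simple hij.symm hi) hj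
  have hcc := R.cc_pos
  have hpair : ∑ k ∈ ({i, j} : Finset ι), (R.m k : ℝ) * ⟪R.α k, R.ψ⟫
      = (R.m i : ℝ) * (R.cc / 2) + (R.m j : ℝ) * (R.cc / 2) := by
    rw [Finset.sum_pair hij, hhi, hhj]
  have hsplit : R.cc = (∑ k ∈ Finset.univ \ {i, j}, (R.m k : ℝ) * ⟪R.α k, R.ψ⟫)
      + ((R.m i : ℝ) * (R.cc / 2) + (R.m j : ℝ) * (R.cc / 2)) := by
    rw [← hpair, Finset.sum_sdiff (Finset.subset_univ _)]
    exact R.psi_self_expand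
  have hrest_nonneg : 0 ≤ ∑ k ∈ Finset.univ \ {i, j}, (R.m k : ℝ) * ⟪R.α k, R.ψ⟫ :=
    Finset.sum_nonneg fun k _ => mul_nonneg (Nat.cast_nonneg _) (R.inner_psi_nonneg k)
  have hmi : (1:ℝ) ≤ (R.m i : ℝ) := by exact_mod_cast R.m_pos i
  have hmj : (1:ℝ) ≤ (R.m j : ℝ) := by exact_mod_cast R.m_pos j
  have hs2 : (R.m i : ℝ) + (R.m j : ℝ) ≤ 2 := by
    by_contra hgt
    push_neg at hgt
    have h3 : 2 * R.cc < ((R.m i : ℝ) + (R.m j : ℝ)) * R.cc := mul_lt_mul_of_pos_right hgt hcc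
    nlinarith
  have hmi1 : (R.m i : ℝ) = 1 := by linarith
  have hmj1 : (R.m j : ℝ) = 1 := by linarith
  have hrest0 : ∑ k ∈ Finset.univ \ {i, j}, (R.m k : ℝ) * ⟪R.α k, R.ψ⟫ = 0 := by
    rw [hmi1, hmj1] at hsplit
    linarith
  refine ⟨by exact_mod_cast hmi1, by exact_mod_cast hmj1, ?_⟩
  intro k hki hkj
  have hk : k ∈ Finset.univ \ {i, j} := by simp [hki, hkj]
  have hterm := (Finset.sum_eq_zero_iff_of_nonneg
    (fun k _ => mul_nonneg (Nat.cast_nonneg _) (R.inner_psi_nonneg k))).mp hrest0 k hk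
  have hmk : (1:ℝ) ≤ (R.m k : ℝ) := by exact_mod_cast R.m_pos k
  rcases mul_eq_zero.mp hterm with h0 | h0
  · linarith
  · exact h0

open scoped Classical in
/-- the Dynkin diagram as a simple graph -/
noncomputable def graph : SimpleGraph ι where
  Adj a b := a ≠ b ∧ ⟪R.α a, R.α b⟫ ≠ 0
  symm := by
    constructor
    rintro a b ⟨h1, h2⟩
    exact ⟨h1.symm, by rwa [real_inner_comm]⟩
  loopless := ⟨fun a h => h.1 rfl⟩

lemma graph_adj {a b : ι} : R.graph.Adj a b ↔ a ≠ b ∧ ⟪R.α a, R.α b⟫ ≠ 0 := Iff.rfl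

lemma graph_reachable (a b : ι) : R.graph.Reachable a b := by
  have hcl := R.connected {k | R.graph.Reachable a k} ?_
  · rcases hcl with hE | hU
    · exfalso
      have : a ∈ ({k | R.graph.Reachable a k} : Set ι) := SimpleGraph.Reachable.refl a
      rw [hE] at this
      exact this
    · have : b ∈ ({k | R.graph.Reachable a k} : Set ι) := by rw [hU]; trivial
      exact this
  · intro x hx y hy
    by_contra hne0
    apply hy
    have hxy : x ≠ y := by rintro rfl; exact hy hx
    have hadj : R.graph.Adj x y := ⟨hxy, hne0⟩
    exact SimpleGraph.Reachable.trans hx hadj.reachable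
lemma sum_m_eq_one {s : Finset ι} (hs : ∑ x ∈ s, R.m x = 1) :
    ∃ u, s = {u} ∧ R.m u = 1 := by
  rcases Finset.eq_empty_or_nonempty s with rfl | ⟨u, hu⟩
  · simp at hs
  have hsing : s = {u} := by
    apply Finset.eq_singleton_iff_unique_mem.mpr
    refine ⟨hu, fun v hv => ?_⟩
    by_contra hvu
    have h1 : R.m u + ∑ x ∈ s.erase u, R.m x = 1 := by
      rw [Finset.add_sum_erase _ _ hu]; exact hs
    have h2 : R.m v ≤ ∑ x ∈ s.erase u, R.m x :=
      Finset.single_le_sum (fun x _ => Nat.zero_le _) (Finset.mem_erase.mpr ⟨hvu, hv⟩)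
    have h3 := R.m_pos u
    have h4 := R.m_pos v
    omega
  refine ⟨u, hsing, ?_⟩
  rw [hsing, Finset.sum_singleton] at hs
  exact hs

lemma nbr_sum_of_inner (k : ι) (hk : ⟪R.α k, R.ψ⟫ = 0) :
    ∑ l ∈ R.nbr k, R.m l = 2 * R.m k := by
  have heq := R.psi_eq k
  rw [hk] at heq
  have hcc := R.cc_pos
  have hcc2 : R.cc / 2 ≠ 0 := ne_of_gt (by linarith)
  have h3 : (R.cc / 2) * (∑ l ∈ R.nbr k, (R.m l : ℝ)) = (R.cc / 2) * (2 * (R.m k : ℝ)) := by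
    linear_combination heq
  have h4 : (∑ l ∈ R.nbr k, (R.m l : ℝ)) = 2 * (R.m k : ℝ) := mul_left_cancel₀ hcc2 h3
  exact_mod_cast h4

lemma nbr_sum_end (k : ι) (hk : ⟪R.α k, R.ψ⟫ = R.cc / 2) (hmk : R.m k = 1) :
    ∑ l ∈ R.nbr k, R.m l = 1 := by
  have heq := R.psi_eq k
  rw [hk, hmk] at heq
  have hcc := R.cc_pos
  have hcc2 : R.cc / 2 ≠ 0 := ne_of_gt (by linarith)
  have h3 : (R.cc / 2) * (∑ l ∈ R.nbr k, (R.m l : ℝ)) = (R.cc / 2) * 1 := by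
    push_cast at heq
    linear_combination heq
  have h4 : (∑ l ∈ R.nbr k, (R.m l : ℝ)) = 1 := mul_left_cancel₀ hcc2 h3
  exact_mod_cast h4

open scoped Classical in
lemma card_delta : R.Δ.card = 2 * (R.Δ.filter R.IsPos).card := by
  classical
  have hsplit : R.Δ = (R.Δ.filter R.IsPos) ∪ (R.Δ.filter (fun φ => R.IsPos (-φ))) := by
    ext φ
    simp only [Finset.mem_union, Finset.mem_filter]
    constructor
    · intro hφ
      rcases R.pos_or_neg hφ with h | h
      · exact Or.inl ⟨hφ, h⟩
      · exact Or.inr ⟨hφ, h⟩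
    · rintro (⟨h, -⟩ | ⟨h, -⟩) <;> exact h
  have hdisj : Disjoint (R.Δ.filter R.IsPos) (R.Δ.filter (fun φ => R.IsPos (-φ))) := by
    rw [Finset.disjoint_left]
    intro φ h1 h2
    rw [Finset.mem_filter] at h1 h2
    exact R.not_pos_neg h1.1 h1.2 h2.2
  have hcard : (R.Δ.filter (fun φ => R.IsPos (-φ))).card = (R.Δ.filter R.IsPos).card := by
    apply Finset.card_bij (fun φ _ => -φ)
    · intro φ hφ
      rw [Finset.mem_filter] at hφ ⊢
      exact ⟨R.neg_mem hφ.1, hφ.2⟩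
    · intro φ1 h1 φ2 h2 hEq
      exact neg_injective hEq
    · intro ρ hρ
      rw [Finset.mem_filter] at hρ
      refine ⟨-ρ, ?_, neg_neg ρ⟩
      rw [Finset.mem_filter, neg_neg]
      exact ⟨R.neg_mem hρ.1, hρ.2⟩
  conv_lhs => rw [hsplit]
  rw [Finset.card_union_of_disjoint hdisj, hcard]
  ring

/-- the set of simple roots indexed by an interval of the path -/
noncomputable def ivl (e : ℕ → ι) (a b : ℕ) : Finset ι := (Finset.Icc a b).image e

/-- sum of the simple roots over an interval of the path -/
noncomputable def ivlSum (e : ℕ → ι) (a b : ℕ) : V := ∑ k ∈ ivl e a b, R.α k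
open scoped Classical in
lemma path_count (n : ℕ) (hn2 : 2 ≤ n) (e : ℕ → ι)
    (hinj : ∀ s t, s < n → t < n → e s = e t → s = t)
    (hsurj : ∀ k : ι, ∃ t, t < n ∧ e t = k)
    (hval : ∀ s t, s < n → t < n → s ≠ t →
      ⟪R.α (e s), R.α (e t)⟫ = if (s + 1 = t ∨ t + 1 = s) then -(R.cc / 2) else 0) :
    (R.Δ.filter R.IsPos).card * 2 = n * (n + 1) := by
  classical
  have hcc := R.cc_pos
  have hsum : ∀ a b : ℕ, b < n → R.ivlSum e a b = ∑ t ∈ Finset.Icc a b, R.α (e t) := by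
    intro a b hb
    apply Finset.sum_image
    intro x hx y hy hxy
    exact hinj x y (lt_of_le_of_lt (Finset.mem_Icc.mp hx).2 hb)
      (lt_of_le_of_lt (Finset.mem_Icc.mp hy).2 hb) hxy
  have hmemI : ∀ a b s : ℕ, b < n → s < n → (e s ∈ ivl e a b ↔ s ∈ Finset.Icc a b) := by
    intro a b s hb hs
    constructor
    · intro hmem
      obtain ⟨t, ht, hts⟩ := Finset.mem_image.mp hmem
      have := hinj t s (lt_of_le_of_lt (Finset.mem_Icc.mp ht).2 hb) hs hts
      rwa [← this]
    · intro hmem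
      exact Finset.mem_image_of_mem e hmem
  have hrep : ∀ a b : ℕ, ∑ k, (if k ∈ ivl e a b then (1:ℝ) else 0) • R.α k = R.ivlSum e a b := by
    intro a b
    simp only [ivlSum]
    simp [ite_smul, Finset.sum_ite_mem, Finset.univ_inter]
  have hposiv : ∀ a b : ℕ, R.IsPos (R.ivlSum e a b) := by
    intro a b
    refine ⟨fun k => if k ∈ ivl e a b then 1 else 0, ?_⟩
    rw [← hrep a b]
    apply Finset.sum_congr rfl
    intro k _
    by_cases hk : k ∈ ivl e a b <;> simp [hk]
  have claimA : ∀ d a b : ℕ, a ≤ b → b < n → b - a = d → R.ivlSum e a b ∈ R.Δ := by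
    intro d
    induction d with
    | zero =>
      intro a b hab hb hd
      have hab' : a = b := by omega
      subst hab'
      have h1 : R.ivlSum e a a = R.α (e a) := by rw [hsum a a hb]; simp
      rw [h1]
      exact R.hα _
    | succ d IH =>
      intro a b hab hb hd
      have hb' : b - 1 < n := by omega
      have hIH := IH a (b - 1) (by omega) hb' (by omega)
      have hsplitI : ivl e a b = insert (e b) (ivl e a (b - 1)) := by
        have hIc : Finset.Icc a b = insert b (Finset.Icc a (b-1)) := by
          ext t; simp only [Finset.mem_Icc, Finset.mem_insert]; omega
        simp only [ivl]
        rw [hIc, Finset.image_insert]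
      have hnotmem : e b ∉ ivl e a (b - 1) := by
        intro hmem
        have := (hmemI a (b-1) b hb' hb).mp hmem
        rw [Finset.mem_Icc] at this
        omega
      have hβsplit : R.ivlSum e a b = R.α (e b) + R.ivlSum e a (b - 1) := by
        simp only [ivlSum]
        rw [hsplitI, Finset.sum_insert hnotmem]
      have hinner : ⟪R.ivlSum e a (b-1), R.α (e b)⟫ = -(R.cc / 2) := by
        rw [hsum a (b-1) hb', sum_inner]
        have hterm : ∀ t ∈ Finset.Icc a (b-1), ⟪R.α (e t), R.α (e b)⟫
            = if t = b - 1 then -(R.cc/2) else 0 := by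
          intro t ht
          rw [Finset.mem_Icc] at ht
          have htn : t < n := by omega
          have htb : t ≠ b := by omega
          rw [hval t b htn hb htb]
          by_cases hcon : t = b - 1
          · rw [if_pos hcon, if_pos (by omega)]
          · rw [if_neg hcon, if_neg (by omega)]
        rw [Finset.sum_congr rfl hterm, Finset.sum_ite_eq' (Finset.Icc a (b-1)) (b-1)]
        rw [if_pos (Finset.mem_Icc.mpr ⟨by omega, le_refl _⟩)]
      have hneg : -R.α (e b) ∈ R.Δ := R.neg_mem (R.hα _)
      have hpos2 : 0 < ⟪-R.α (e b), R.ivlSum e a (b-1)⟫ := by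
        rw [inner_neg_left, real_inner_comm, hinner]
        linarith
      have hne : R.ivlSum e a (b-1) ≠ -R.α (e b) := by
        intro hEq
        have hsum_ivl : ∑ k ∈ ivl e a (b-1), R.α k = R.ivlSum e a (b-1) := rfl
        have h0 : ∑ k, ((if k = e b then (1:ℝ) else 0)
            + (if k ∈ ivl e a (b-1) then 1 else 0)) • R.α k = 0 := by
          simp only [add_smul, Finset.sum_add_distrib, ite_smul, zero_smul, one_smul,
            Finset.sum_ite_eq', Finset.mem_univ, if_true, Finset.sum_ite_mem,
            Finset.univ_inter]
          rw [hsum_ivl, hEq]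
          abel
        have hlin := Fintype.linearIndependent_iff.mp R.hαind _ h0 (e b)
        simp [hnotmem] at hlin
      obtain ⟨_, hmem⟩ := R.sub_mem hIH hneg hne hpos2
      rw [sub_neg_eq_add] at hmem
      rw [hβsplit, add_comm]
      exact hmem
  have claimB : ∀ N : ℕ, ∀ φ ∈ R.Δ, ∀ c : ι → ℕ, φ = ∑ k, (c k : ℝ) • R.α k →
      ∑ k, c k = N → ∃ a b : ℕ, a ≤ b ∧ b < n ∧ φ = R.ivlSum e a b := by
    intro N
    induction N using Nat.strong_induction_on with
    | _ N IH =>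
      intro φ hφ c hc hN
      by_cases hsimp : ∃ k, φ = R.α k
      · obtain ⟨k, hk⟩ := hsimp
        obtain ⟨t, htn, hte⟩ := hsurj k
        refine ⟨t, t, le_refl t, htn, ?_⟩
        have h1 : R.ivlSum e t t = R.α (e t) := by rw [hsum t t htn]; simp
        rw [h1, hte, hk]
      · push_neg at hsimp
        obtain ⟨i0, d, hmem, hci, hdj, hd⟩ := R.descent hφ c hc hsimp
        have hsum_d : ∑ k, d k < N := by
          have hcd : ∀ k, c k = d k + (if k = i0 then 1 else 0) := by
            intro k
            by_cases hk : k = i0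
            · subst hk; rw [hci]; simp
            · rw [hdj k hk]; simp [hk]
          have h2 : ∑ k, c k = (∑ k, d k) + 1 := by
            rw [Finset.sum_congr rfl (fun k _ => hcd k), Finset.sum_add_distrib]
            simp
          omega
        obtain ⟨a, b, hab, hbn, hβeq⟩ := IH _ hsum_d _ hmem d hd rfl
        obtain ⟨s, hsn, hse⟩ := hsurj i0
        have hinner : ⟪φ - R.α i0, R.α i0⟫ = -(R.cc/2) := by
          have h1 : R.cc = ⟪φ, φ⟫ := (R.inner_self hφ).symm
          have hid : φ = (φ - R.α i0) + R.α i0 := by abel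
          have h2 : ⟪φ, φ⟫ = ⟪(φ - R.α i0) + R.α i0, (φ - R.α i0) + R.α i0⟫ := by rw [← hid]
          rw [real_inner_add_add_self, R.inner_self hmem, R.inner_self (R.hα i0)] at h2
          linarith
        have hexpand : ⟪φ - R.α i0, R.α i0⟫ = ∑ t ∈ Finset.Icc a b, ⟪R.α (e t), R.α (e s)⟫ := by
          rw [hβeq, hsum a b hbn, sum_inner, hse]
        by_cases hsIcc : s ∈ Finset.Icc a b
        · exfalso
          have hsplit2 : ∑ t ∈ Finset.Icc a b, ⟪R.α (e t), R.α (e s)⟫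
              = ⟪R.α (e s), R.α (e s)⟫
                + ∑ t ∈ (Finset.Icc a b).erase s, ⟪R.α (e t), R.α (e s)⟫ := by
            exact (Finset.add_sum_erase _ (fun t => ⟪R.α (e t), R.α (e s)⟫) hsIcc).symm
          set U := ((Finset.Icc a b).erase s).filter (fun t => ⟪R.α (e t), R.α (e s)⟫ ≠ 0)
            with hU
          have hUsub : U ⊆ {s - 1, s + 1} := by
            intro t htU
            rw [hU, Finset.mem_filter, Finset.mem_erase] at htU
            obtain ⟨⟨hts, htI⟩, htne⟩ := htU
            rw [Finset.mem_Icc] at htI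
            have htn : t < n := by omega
            have hval' := hval t s htn hsn hts
            by_cases hcon : t + 1 = s ∨ s + 1 = t
            · rw [Finset.mem_insert, Finset.mem_singleton]
              omega
            · rw [if_neg hcon] at hval'
              exact absurd hval' htne
          have hUcard : U.card ≤ 2 := by
            apply le_trans (Finset.card_le_card hUsub)
            apply le_trans (Finset.card_insert_le _ _)
            simp
          have hUval : ∀ t ∈ U, ⟪R.α (e t), R.α (e s)⟫ = -(R.cc/2) := by
            intro t htU
            rw [hU, Finset.mem_filter, Finset.mem_erase] at htU
            obtain ⟨⟨hts, htI⟩, htne⟩ := htU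
            rw [Finset.mem_Icc] at htI
            have htn : t < n := by omega
            have hval' := hval t s htn hsn hts
            by_cases hcon : t + 1 = s ∨ s + 1 = t
            · rw [if_pos hcon] at hval'
              exact hval'
            · rw [if_neg hcon] at hval'
              exact absurd hval' htne
          have hsum_erase : ∑ t ∈ (Finset.Icc a b).erase s, ⟪R.α (e t), R.α (e s)⟫
              = ∑ t ∈ U, ⟪R.α (e t), R.α (e s)⟫ := by
            symm
            apply Finset.sum_subset (Finset.filter_subset _ _)
            intro x hx hnx
            by_contra h0
            exact hnx (Finset.mem_filter.mpr ⟨hx, h0⟩)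
          have hUsum : ∑ t ∈ U, ⟪R.α (e t), R.α (e s)⟫ = U.card * (-(R.cc/2)) := by
            rw [Finset.sum_congr rfl hUval, Finset.sum_const, nsmul_eq_mul]
          have hcard2 : (U.card : ℝ) ≤ 2 := by exact_mod_cast hUcard
          have hfin : ⟪φ - R.α i0, R.α i0⟫
              = ⟪R.α (e s), R.α (e s)⟫ + (U.card : ℝ) * (-(R.cc/2)) := by
            rw [hexpand, hsplit2, hsum_erase, hUsum]
          rw [hinner, R.inner_self (R.hα (e s))] at hfin
          nlinarith
        · set U := (Finset.Icc a b).filter (fun t => ⟪R.α (e t), R.α (e s)⟫ ≠ 0) with hU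
          have hUval : ∀ t ∈ U, ⟪R.α (e t), R.α (e s)⟫ = -(R.cc/2) := by
            intro t htU
            rw [hU, Finset.mem_filter] at htU
            obtain ⟨htI, htne⟩ := htU
            have hts : t ≠ s := fun hEq => hsIcc (hEq ▸ htI)
            rw [Finset.mem_Icc] at htI
            have htn : t < n := by omega
            have hval' := hval t s htn hsn hts
            by_cases hcon : t + 1 = s ∨ s + 1 = t
            · rw [if_pos hcon] at hval'
              exact hval'
            · rw [if_neg hcon] at hval'
              exact absurd hval' htne
          have hsum_U : ∑ t ∈ Finset.Icc a b, ⟪R.α (e t), R.α (e s)⟫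
              = ∑ t ∈ U, ⟪R.α (e t), R.α (e s)⟫ := by
            symm
            apply Finset.sum_subset (Finset.filter_subset _ _)
            intro x hx hnx
            by_contra h0
            exact hnx (Finset.mem_filter.mpr ⟨hx, h0⟩)
          have hUsum : ∑ t ∈ U, ⟪R.α (e t), R.α (e s)⟫ = U.card * (-(R.cc/2)) := by
            rw [Finset.sum_congr rfl hUval, Finset.sum_const, nsmul_eq_mul]
          have hU1 : U.card = 1 := by
            have hfin : -(R.cc/2) = (U.card : ℝ) * (-(R.cc/2)) := by
              have h9 : ⟪φ - R.α i0, R.α i0⟫ = (U.card : ℝ) * (-(R.cc/2)) := by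
                rw [hexpand, hsum_U, hUsum]
              rw [hinner] at h9
              exact h9
            have hcc2 : -(R.cc / 2) ≠ 0 := by
              intro h0
              have : R.cc / 2 = 0 := by linarith
              linarith
            have h2 : (U.card : ℝ) = 1 := by
              have h3 : (U.card : ℝ) * (-(R.cc/2)) = 1 * (-(R.cc/2)) := by
                rw [one_mul, ← hfin]
              exact mul_right_cancel₀ hcc2 h3
            exact_mod_cast h2
          obtain ⟨t0, ht0⟩ := Finset.card_eq_one.mp hU1
          have ht0mem : t0 ∈ U := by rw [ht0]; exact Finset.mem_singleton_self t0
          rw [hU, Finset.mem_filter] at ht0mem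
          obtain ⟨ht0I, ht0ne⟩ := ht0mem
          have ht0s : t0 ≠ s := fun hEq => hsIcc (hEq ▸ ht0I)
          have ht0Icc := Finset.mem_Icc.mp ht0I
          have ht0n : t0 < n := by omega
          have hcons : t0 + 1 = s ∨ s + 1 = t0 := by
            have hval' := hval t0 s ht0n hsn ht0s
            by_contra hno
            rw [if_neg hno] at hval'
            exact ht0ne hval'
          have hsnotin := hsIcc
          rw [Finset.mem_Icc] at hsnotin
          rcases hcons with hcase | hcase
          · -- s = b + 1
            have hkey : t0 = b ∧ s = b + 1 := by omega
            refine ⟨a, s, by omega, hsn, ?_⟩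
            have hIccsplit : Finset.Icc a s = insert s (Finset.Icc a b) := by
              ext u
              simp only [Finset.mem_Icc, Finset.mem_insert]
              omega
            have hnm : e s ∉ ivl e a b := fun hmem' => hsIcc ((hmemI a b s hbn hsn).mp hmem')
            have hinsert : ivl e a s = insert (e s) (ivl e a b) := by
              simp only [ivl]
              rw [hIccsplit, Finset.image_insert]
            have hβs : R.ivlSum e a s = R.α (e s) + R.ivlSum e a b := by
              simp only [ivlSum]
              rw [hinsert, Finset.sum_insert hnm]
            rw [hβs, ← hβeq, hse]
            abel
          · -- a = s + 1
            have hkey : t0 = a ∧ a = s + 1 := by omega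
            refine ⟨s, b, by omega, hbn, ?_⟩
            have hIccsplit : Finset.Icc s b = insert s (Finset.Icc a b) := by
              ext u
              simp only [Finset.mem_Icc, Finset.mem_insert]
              omega
            have hnm : e s ∉ ivl e a b := fun hmem' => hsIcc ((hmemI a b s hbn hsn).mp hmem')
            have hinsert : ivl e s b = insert (e s) (ivl e a b) := by
              simp only [ivl]
              rw [hIccsplit, Finset.image_insert]
            have hβs : R.ivlSum e s b = R.α (e s) + R.ivlSum e a b := by
              simp only [ivlSum]
              rw [hinsert, Finset.sum_insert hnm]
            rw [hβs, ← hβeq, hse]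
            abel
  -- counting the intervals
  set P : Finset (ℕ × ℕ) := (Finset.range n).biUnion
    (fun b => (Finset.range (b+1)).image (fun a => (a, b))) with hP
  have hmemP : ∀ p : ℕ × ℕ, p ∈ P ↔ (p.1 ≤ p.2 ∧ p.2 < n) := by
    intro p
    rw [hP]
    simp only [Finset.mem_biUnion, Finset.mem_image, Finset.mem_range]
    constructor
    · rintro ⟨b, hb, a, ha, hpe⟩
      rw [← hpe]
      exact ⟨by omega, hb⟩
    · rintro ⟨h1, h2⟩
      exact ⟨p.2, h2, p.1, by omega, rfl⟩
  have hcardP : P.card = ∑ b ∈ Finset.range n, (b + 1) := by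
    rw [hP, Finset.card_biUnion]
    · apply Finset.sum_congr rfl
      intro b _
      rw [Finset.card_image_of_injective _ (fun a a' hEq => congrArg Prod.fst hEq)]
      exact Finset.card_range (b+1)
    · intro x hx y hy hxy
      rw [Function.onFun, Finset.disjoint_left]
      intro p hp1 hp2
      obtain ⟨a1, -, hp1e⟩ := Finset.mem_image.mp hp1
      obtain ⟨a2, -, hp2e⟩ := Finset.mem_image.mp hp2
      apply hxy
      have e1 := congrArg Prod.snd hp1e
      have e2 := congrArg Prod.snd hp2e
      simp only [] at e1 e2
      omega
  have hgauss : (∑ b ∈ Finset.range n, (b + 1)) * 2 = n * (n + 1) := by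
    have h1 : ∑ b ∈ Finset.range n, (b+1) = ∑ b ∈ Finset.range (n+1), b := by
      rw [Finset.sum_range_succ']
      simp
    rw [h1, Finset.sum_range_id_mul_two, Nat.add_sub_cancel, Nat.mul_comm]
  have hbij : P.card = (R.Δ.filter R.IsPos).card := by
    apply Finset.card_bij (fun p _ => R.ivlSum e p.1 p.2)
    · intro p hp
      rw [hmemP] at hp
      refine Finset.mem_filter.mpr ⟨?_, hposiv p.1 p.2⟩
      exact claimA (p.2 - p.1) p.1 p.2 hp.1 hp.2 rfl
    · intro p hp q hq hEq
      rw [hmemP] at hp hq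
      have hcoef := R.coeff_eq (fun k => if k ∈ ivl e p.1 p.2 then (1:ℝ) else 0)
        (fun k => if k ∈ ivl e q.1 q.2 then (1:ℝ) else 0) (by rw [hrep, hrep]; exact hEq)
      have hsets : ivl e p.1 p.2 = ivl e q.1 q.2 := by
        ext k
        have hck := congrFun hcoef k
        constructor
        · intro h1
          by_contra h2
          rw [if_pos h1, if_neg h2] at hck
          norm_num at hck
        · intro h2
          by_contra h1
          rw [if_neg h1, if_pos h2] at hck
          norm_num at hck
      have hIcc : Finset.Icc p.1 p.2 = Finset.Icc q.1 q.2 := by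
        ext t
        constructor
        · intro ht
          have htn : t < n := by
            have := (Finset.mem_Icc.mp ht).2
            omega
          have hmem2 : e t ∈ ivl e q.1 q.2 := by
            rw [← hsets]
            exact Finset.mem_image_of_mem e ht
          exact (hmemI q.1 q.2 t hq.2 htn).mp hmem2
        · intro ht
          have htn : t < n := by
            have := (Finset.mem_Icc.mp ht).2
            omega
          have hmem2 : e t ∈ ivl e p.1 p.2 := by
            rw [hsets]
            exact Finset.mem_image_of_mem e ht
          exact (hmemI p.1 p.2 t hp.2 htn).mp hmem2
      have h1 : p.1 ∈ Finset.Icc q.1 q.2 := by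
        rw [← hIcc]; exact Finset.mem_Icc.mpr ⟨le_refl _, hp.1⟩
      have h2 : q.1 ∈ Finset.Icc p.1 p.2 := by
        rw [hIcc]; exact Finset.mem_Icc.mpr ⟨le_refl _, hq.1⟩
      have h3 : p.2 ∈ Finset.Icc q.1 q.2 := by
        rw [← hIcc]; exact Finset.mem_Icc.mpr ⟨hp.1, le_refl _⟩
      have h4 : q.2 ∈ Finset.Icc p.1 p.2 := by
        rw [hIcc]; exact Finset.mem_Icc.mpr ⟨hq.1, le_refl _⟩
      rw [Finset.mem_Icc] at h1 h2 h3 h4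
      have hpq : p.1 = q.1 ∧ p.2 = q.2 := by omega
      exact Prod.ext hpq.1 hpq.2
    · intro φ hφ
      rw [Finset.mem_filter] at hφ
      obtain ⟨c, hc⟩ := hφ.2
      obtain ⟨a, b, hab, hbn, hβeq⟩ := claimB (∑ k, c k) φ hφ.1 c hc rfl
      exact ⟨(a, b), (hmemP _).mpr ⟨hab, hbn⟩, hβeq.symm⟩
  rw [← hbij, hcardP]
  exact hgauss
lemma bool_flip {x y : Bool} (h : x ≠ y) : y = !x := by
  cases x <;> cases y <;> simp_all

open scoped Classical in
set_option maxHeartbeats 1000000 in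
lemma mono (h : ℕ) (hcox : R.Δ.card = h * Fintype.card ι) (hheven : Even h)
    (f : ι → Bool) (hfp : ∀ a b : ι, a ≠ b → ⟪R.α a, R.α b⟫ ≠ 0 → f a ≠ f b)
    {i j : ι} (hi : ⟪R.α i, R.ψ⟫ ≠ 0) (hj : ⟪R.α j, R.ψ⟫ ≠ 0) : f i = f j := by
  by_cases hij : i = j
  · rw [hij]
  obtain ⟨hmi, hmj, horth⟩ := R.two_nbrs hij hi hj
  have hhalfi : ⟪R.α i, R.ψ⟫ = R.cc / 2 := R.inner_psi_half i (R.psi_ne_simple hij hj) hi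
  have hhalfj : ⟪R.α j, R.ψ⟫ = R.cc / 2 :=
    R.inner_psi_half j (R.psi_ne_simple (Ne.symm hij) hi) hj
  -- take a path in the graph from i to j
  obtain ⟨w0⟩ := R.graph_reachable i j
  set L : List ι := w0.toPath.1.support with hLdef
  have hnodup : L.Nodup := w0.toPath.2.support_nodup
  have hchain : L.Chain' R.graph.Adj := SimpleGraph.Walk.isChain_adj_support _
  set n : ℕ := L.length with hn
  have hLcons : L = i :: w0.toPath.1.support.tail := by
    rw [hLdef, ← SimpleGraph.Walk.support_eq_cons]
  have hn0 : 0 < n := by rw [hn, hLcons]; simp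
  set e : ℕ → ι := fun t => L.getD t i with he
  have hget : ∀ t (ht : t < n), e t = L.get ⟨t, ht⟩ := by
    intro t ht
    simp only [he]
    exact List.getD_eq_getElem L i ht
  have he0 : e 0 = i := by simp [he, hLcons]
  have hLne : L ≠ [] := by rw [hLcons]; simp
  have helast : e (n - 1) = j := by
    have h2 := SimpleGraph.Walk.getLast_support w0.toPath.1
    rw [hget (n-1) (by omega)] at *
    rw [List.getLast_eq_getElem] at h2
    exact h2
  have hinj : ∀ s t, s < n → t < n → e s = e t → s = t := by
    intro s t hs ht hEq
    rw [hget s hs, hget t ht] at hEq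
    have h3 := (List.nodup_iff_injective_get.mp hnodup) hEq
    simpa using congrArg Fin.val h3
  have hadj : ∀ t, t + 1 < n → R.graph.Adj (e t) (e (t+1)) := by
    intro t ht
    rw [hget t (by omega), hget (t+1) ht]
    exact List.isChain_iff_getElem.mp hchain t (by omega)
  have hn2 : 2 ≤ n := by
    rcases Nat.lt_or_ge n 2 with h2 | h2
    · exfalso
      apply hij
      have h01 : n - 1 = 0 := by omega
      rw [← he0, ← helast, h01]
    · exact h2
  have hmem_nbr_succ : ∀ t, t + 1 < n → e (t+1) ∈ R.nbr (e t) := by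
    intro t ht
    have hadj' := hadj t ht
    exact R.mem_nbr.mpr ⟨hadj'.1.symm, hadj'.2⟩
  -- neighbour structure at the two ends
  have hsum0 : ∑ l ∈ R.nbr i, R.m l = 1 := R.nbr_sum_end i hhalfi hmi
  have hsumlast : ∑ l ∈ R.nbr j, R.m l = 1 := R.nbr_sum_end j hhalfj hmj
  obtain ⟨u0, hu0, hmu0⟩ := R.sum_m_eq_one hsum0
  have he1u : e 1 = u0 := by
    have h1 : e 1 ∈ R.nbr i := by
      rw [← he0]
      exact hmem_nbr_succ 0 (by omega)
    rw [hu0] at h1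
    exact Finset.mem_singleton.mp h1
  have hnbr0 : R.nbr (e 0) = {e 1} := by rw [he0, hu0, he1u]
  have hm1 : R.m (e 1) = 1 := by rw [he1u]; exact hmu0
  obtain ⟨v0, hv0, hmv0⟩ := R.sum_m_eq_one hsumlast
  have hprev : e (n-2) ∈ R.nbr (e (n-1)) := by
    have h1 := hmem_nbr_succ (n-2) (by omega)
    have h2 : n - 2 + 1 = n - 1 := by omega
    rw [h2] at h1
    exact R.nbr_symm h1
  have hen2v : e (n-2) = v0 := by
    rw [helast, hv0] at hprev
    exact Finset.mem_singleton.mp hprev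
  have hnbrlast : R.nbr (e (n-1)) = {e (n-2)} := by rw [helast, hv0, hen2v]
  -- internal equations
  have hne_ends : ∀ t, 0 < t → t + 1 < n → e t ≠ i ∧ e t ≠ j := by
    intro t h0 h1
    constructor
    · intro hEq
      rw [← he0] at hEq
      have := hinj t 0 (by omega) (by omega) hEq
      omega
    · intro hEq
      rw [← helast] at hEq
      have := hinj t (n-1) (by omega) (by omega) hEq
      omega
  have hsum_int : ∀ t, 0 < t → t + 1 < n → ∑ l ∈ R.nbr (e t), R.m l = 2 * R.m (e t) := by
    intro t h0 h1
    apply R.nbr_sum_of_inner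
    exact horth _ (hne_ends t h0 h1).1 (hne_ends t h0 h1).2
  -- the propagation along the path
  have H : ∀ t, t < n →
      R.m (e t) = 1 ∧ (0 < t → t + 1 < n → R.nbr (e t) = {e (t-1), e (t+1)}) := by
    intro t
    induction t using Nat.strong_induction_on with
    | _ t IH =>
      intro ht
      have hm_t : R.m (e t) = 1 := by
        rcases Nat.eq_zero_or_pos t with rfl | ht0
        · rw [he0]; exact hmi
        rcases Nat.eq_or_lt_of_le ht0 with h1 | h1
        · rw [← h1]; exact hm1
        · have ht1 : t - 1 < n := by omega
          have hIH1 := IH (t-1) (by omega) ht1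
          have hIH2 := (IH (t-2) (by omega) (by omega)).1
          have hchar := hIH1.2 (by omega) (by omega)
          have hs := hsum_int (t-1) (by omega) (by omega)
          rw [hchar, hIH1.1] at hs
          have hpairne : e (t-1-1) ≠ e (t-1+1) := by
            intro hEq
            have := hinj (t-1-1) (t-1+1) (by omega) (by omega) hEq
            omega
          rw [Finset.sum_pair hpairne] at hs
          have ht2 : t - 1 - 1 = t - 2 := by omega
          have ht3 : t - 1 + 1 = t := by omega
          rw [ht2, ht3, hIH2] at hs
          omega
      refine ⟨hm_t, ?_⟩
      intro ht0 ht1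
      have hprev_mem : e (t-1) ∈ R.nbr (e t) := by
        have h1 := hmem_nbr_succ (t-1) (by omega)
        have ht3 : t - 1 + 1 = t := by omega
        rw [ht3] at h1
        exact R.nbr_symm h1
      have hnext_mem : e (t+1) ∈ R.nbr (e t) := hmem_nbr_succ t ht1
      have hmprev : R.m (e (t-1)) = 1 := (IH (t-1) (by omega) (by omega)).1
      have hs := hsum_int t ht0 ht1
      rw [hm_t] at hs
      have hsplit : R.m (e (t-1)) + ∑ l ∈ (R.nbr (e t)).erase (e (t-1)), R.m l = 2 := by
        rw [Finset.add_sum_erase _ _ hprev_mem]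
        exact hs
      have hsum1 : ∑ l ∈ (R.nbr (e t)).erase (e (t-1)), R.m l = 1 := by omega
      obtain ⟨u, hu, hmu⟩ := R.sum_m_eq_one hsum1
      have hnext_in : e (t+1) ∈ (R.nbr (e t)).erase (e (t-1)) := by
        refine Finset.mem_erase.mpr ⟨?_, hnext_mem⟩
        intro hEq
        have := hinj (t+1) (t-1) ht1 (by omega) hEq
        omega
      rw [hu, Finset.mem_singleton] at hnext_in
      have hins : R.nbr (e t) = insert (e (t-1)) ((R.nbr (e t)).erase (e (t-1))) :=
        (Finset.insert_erase hprev_mem).symm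
      rw [hins, hu, ← hnext_in]
  -- inner-product values along the path
  have hval : ∀ s t, s < n → t < n → s ≠ t →
      ⟪R.α (e s), R.α (e t)⟫ = if (s + 1 = t ∨ t + 1 = s) then -(R.cc / 2) else 0 := by
    intro s t hs ht hst
    by_cases hcon : s + 1 = t ∨ t + 1 = s
    · rw [if_pos hcon]
      rcases hcon with h1 | h1
      · apply R.inner_nbr
        subst h1
        exact hmem_nbr_succ s ht
      · rw [real_inner_comm]
        apply R.inner_nbr
        subst h1
        exact hmem_nbr_succ t hs
    · rw [if_neg hcon]
      push_neg at hcon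
      by_contra h0
      have hmem : e t ∈ R.nbr (e s) := by
        refine R.mem_nbr.mpr ⟨?_, h0⟩
        intro hEq
        exact hst (hinj t s ht hs hEq).symm
      rcases Nat.eq_zero_or_pos s with rfl | hs0
      · rw [hnbr0] at hmem
        have := hinj t 1 ht (by omega) (Finset.mem_singleton.mp hmem)
        omega
      rcases Nat.lt_or_ge s (n-1) with hs1 | hs1
      · rw [(H s hs).2 hs0 (by omega)] at hmem
        rcases Finset.mem_insert.mp hmem with h1 | h1
        · have := hinj t (s-1) ht (by omega) h1
          omega
        · have := hinj t (s+1) ht (by omega) (Finset.mem_singleton.mp h1)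
          omega
      · have hseq : s = n - 1 := by omega
        rw [hseq, hnbrlast] at hmem
        have := hinj t (n-2) ht (by omega) (Finset.mem_singleton.mp hmem)
        omega
  -- the path covers everything
  have hsurj : ∀ k : ι, ∃ t, t < n ∧ e t = k := by
    have hcl := R.connected {k | ∃ t, t < n ∧ e t = k} ?_
    · rcases hcl with hE | hU
      · exfalso
        have hmemi : i ∈ ({k | ∃ t, t < n ∧ e t = k} : Set ι) := ⟨0, hn0, he0⟩
        rw [hE] at hmemi
        exact hmemi
      · intro k
        have : k ∈ ({k | ∃ t, t < n ∧ e t = k} : Set ι) := by rw [hU]; trivial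
        exact this
    · intro a ha b hb
      by_contra h0
      apply hb
      obtain ⟨t, htn, rfl⟩ := ha
      have hmem : b ∈ R.nbr (e t) := by
        refine R.mem_nbr.mpr ⟨?_, h0⟩
        intro hEq
        exact hb ⟨t, htn, hEq.symm⟩
      rcases Nat.eq_zero_or_pos t with rfl | ht0
      · rw [hnbr0] at hmem
        exact ⟨1, by omega, (Finset.mem_singleton.mp hmem).symm⟩
      rcases Nat.lt_or_ge t (n-1) with ht1 | ht1
      · rw [(H t htn).2 ht0 (by omega)] at hmem
        rcases Finset.mem_insert.mp hmem with h1 | h1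
        · exact ⟨t-1, by omega, h1.symm⟩
        · exact ⟨t+1, by omega, (Finset.mem_singleton.mp h1).symm⟩
      · have hteq : t = n-1 := by omega
        rw [hteq, hnbrlast] at hmem
        exact ⟨n-2, by omega, (Finset.mem_singleton.mp hmem).symm⟩
  -- n = card ι
  have hcard : Fintype.card ι = n := by
    have hbij : Function.Bijective (fun t : Fin n => e t) := by
      constructor
      · intro s t hEq
        exact Fin.ext (hinj s t s.isLt t.isLt hEq)
      · intro k
        obtain ⟨t, htn, hte⟩ := hsurj k
        exact ⟨⟨t, htn⟩, hte⟩
    have h5 := Fintype.card_of_bijective hbij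
    rw [Fintype.card_fin] at h5
    omega
  -- counting: h = n + 1
  have hcount := R.path_count n hn2 e hinj hsurj hval
  have hcd := R.card_delta
  have h1 : n * h = n * (n + 1) := by
    rw [hcard] at hcox
    have h6 : R.Δ.card = n * (n+1) := by omega
    rw [Nat.mul_comm n h, ← hcox]
    exact h6
  have hh : h = n + 1 := Nat.eq_of_mul_eq_mul_left (by omega) h1
  have hnodd : Even (n - 1) := by
    obtain ⟨r, hr⟩ := hheven
    exact ⟨r - 1, by omega⟩
  -- parity along the path
  have halt : ∀ t, t < n → f (e t) = (if Even t then f i else !(f i)) := by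
    intro t
    induction t with
    | zero => intro _; simp [he0]
    | succ t IHt =>
      intro ht
      have hft := IHt (by omega)
      have hadj' := hadj t ht
      have hne2 := hfp (e t) (e (t+1)) hadj'.1 hadj'.2
      have hflip : f (e (t+1)) = !(f (e t)) := bool_flip hne2
      rw [hflip, hft]
      by_cases hpar : Even t
      · rw [if_pos hpar, if_neg (by simp [Nat.even_add_one, hpar])]
      · rw [if_neg hpar, if_pos (by simp [Nat.even_add_one, hpar]), Bool.not_not]
  have hfinal := halt (n-1) (by omega)
  rw [helast, if_pos hnodd] at hfinal
  exact hfinal.symm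

end GoodRS

lemma bool_beq_ne {x y c : Bool} (h : x ≠ y) : (x == c) ≠ (y == c) := by
  cases x <;> cases y <;> cases c <;> simp_all

theorem stmt_9
    {V : Type*} [NormedAddCommGroup V] [InnerProductSpace ℝ V] [FiniteDimensional ℝ V]
    (Δ : Finset V)
    -- `Δ` is an irreducible reduced simply-laced root system spanning `V`
    (hspan : Submodule.span ℝ (Δ : Set V) = ⊤)
    (hzero : (0 : V) ∉ Δ)
    (hreduced : ∀ φ ∈ Δ, ∀ c : ℝ, c • φ ∈ Δ → c = 1 ∨ c = -1)
    (hrefl : ∀ φ ∈ Δ, ∀ θ ∈ Δ, rootReflection φ θ ∈ Δ)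
    (hint : ∀ φ ∈ Δ, ∀ θ ∈ Δ, ∃ m : ℤ, 2 * ⟪φ, θ⟫ / ⟪φ, φ⟫ = (m : ℝ))
    (hlaced : ∀ φ ∈ Δ, ∀ θ ∈ Δ, ‖φ‖ = ‖θ‖)
    (hirred : ∀ A B : Set V, (Δ : Set V) = A ∪ B → (∀ a ∈ A, ∀ b ∈ B, ⟪a, b⟫ = 0) →
      A = ∅ ∨ B = ∅)
    -- base of simple roots `Π = {α i : i ∈ I}`
    {ι : Type*} [Fintype ι] [DecidableEq ι]
    (α : ι → V) (hα : ∀ i, α i ∈ Δ) (hαind : LinearIndependent ℝ α)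
    (hbase : ∀ φ ∈ Δ, (∃ c : ι → ℕ, φ = ∑ i, (c i : ℝ) • α i) ∨
      (∃ c : ι → ℕ, φ = -∑ i, (c i : ℝ) • α i))
    -- the Coxeter number `h = card Δ / ℓ`
    (h : ℕ) (hcox : Δ.card = h * Fintype.card ι)
    -- `h` is even
    (hheven : Even h)
    -- the highest root `ψ`
    (ψ : V) (hψmem : ψ ∈ Δ)
    (hψhigh : ∀ φ ∈ Δ, ∃ c : ι → ℕ, ψ - φ = ∑ i, (c i : ℝ) • α i) :
    ∃! p : Finset ι × Finset ι,
      p.1 ∪ p.2 = Finset.univ ∧ Disjoint p.1 p.2 ∧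
      (∀ i ∈ p.1, ∀ j ∈ p.1, i ≠ j → ⟪α i, α j⟫ = 0) ∧
      (∀ i ∈ p.2, ∀ j ∈ p.2, i ≠ j → ⟪α i, α j⟫ = 0) ∧
      (∀ i ∈ p.2, ⟪α i, ψ⟫ = 0) := by
  classical
  set R : GoodRS V ι :=
    ⟨Δ, α, ψ, hzero, hrefl, hint, hlaced, hirred, hα, hαind, hbase, hψmem, hψhigh⟩ with hR
  obtain ⟨f0, hf0⟩ := R.exists_coloring_aux (Finset.univ.card (α := ι)) Finset.univ rfl
  have hf0' : ∀ a b : ι, a ≠ b → ⟪R.α a, R.α b⟫ ≠ 0 → f0 a ≠ f0 b :=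
    fun a b hab hne => hf0 a (Finset.mem_univ a) b (Finset.mem_univ b) hab hne
  have hex : ∃ i0, ⟪R.α i0, R.ψ⟫ ≠ 0 := by
    by_contra hno
    push_neg at hno
    have hz : R.cc = 0 := by
      rw [R.psi_self_expand]
      apply Finset.sum_eq_zero
      intro k _
      rw [hno k, mul_zero]
    linarith [R.cc_pos]
  obtain ⟨i0, hi0⟩ := hex
  set f : ι → Bool := fun k => f0 k == f0 i0 with hf
  have hfi0 : f i0 = true := by simp [hf]
  have hfp : ∀ a b : ι, a ≠ b → ⟪R.α a, R.α b⟫ ≠ 0 → f a ≠ f b := by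
    intro a b hab hne
    exact bool_beq_ne (hf0' a b hab hne)
  set p₀ : Finset ι × Finset ι :=
    (Finset.univ.filter (fun k => f k = true), Finset.univ.filter (fun k => f k = false))
    with hp₀
  have hsame : ∀ a b : ι, a ≠ b → f a = f b → ⟪R.α a, R.α b⟫ = 0 := by
    intro a b hab hEq
    by_contra hne
    exact hfp a b hab hne hEq
  have hprop : p₀.1 ∪ p₀.2 = Finset.univ ∧ Disjoint p₀.1 p₀.2 ∧
      (∀ i ∈ p₀.1, ∀ j ∈ p₀.1, i ≠ j → ⟪α i, α j⟫ = 0) ∧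
      (∀ i ∈ p₀.2, ∀ j ∈ p₀.2, i ≠ j → ⟪α i, α j⟫ = 0) ∧
      (∀ i ∈ p₀.2, ⟪α i, ψ⟫ = 0) := by
    refine ⟨?_, ?_, ?_, ?_, ?_⟩
    · ext k
      simp only [hp₀, Finset.mem_union, Finset.mem_filter, Finset.mem_univ, true_and]
      cases f k <;> simp
    · rw [Finset.disjoint_left]
      intro k h1 h2
      simp only [hp₀, Finset.mem_filter] at h1 h2
      rw [h1.2] at h2
      exact absurd h2.2 (by simp)
    · intro a ha b hb hab
      simp only [hp₀, Finset.mem_filter] at ha hb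
      exact hsame a b hab (by rw [ha.2, hb.2])
    · intro a ha b hb hab
      simp only [hp₀, Finset.mem_filter] at ha hb
      exact hsame a b hab (by rw [ha.2, hb.2])
    · intro a ha
      simp only [hp₀, Finset.mem_filter] at ha
      by_contra hne
      have := R.mono h hcox hheven f hfp (i := a) (j := i0) hne hi0
      rw [ha.2, hfi0] at this
      exact absurd this (by simp)
  refine ⟨p₀, hprop, ?_⟩
  rintro ⟨q1, q2⟩ ⟨hq1, hq2, hq3, hq4, hq5⟩
  set g : ι → Bool := fun k => decide (k ∈ q1) with hg
  have hmemq : ∀ k, k ∉ q1 → k ∈ q2 := by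
    intro k hk
    have : k ∈ q1 ∪ q2 := by rw [hq1]; exact Finset.mem_univ k
    rcases Finset.mem_union.mp this with h1 | h1
    · exact absurd h1 hk
    · exact h1
  have hnotboth : ∀ k, k ∈ q1 → k ∉ q2 := by
    intro k hk
    exact Finset.disjoint_left.mp hq2 hk
  have hgp : ∀ a b : ι, a ≠ b → ⟪R.α a, R.α b⟫ ≠ 0 → g a ≠ g b := by
    intro a b hab hne
    by_cases ha : a ∈ q1 <;> by_cases hb : b ∈ q1
    · exact absurd (hq3 a ha b hb hab) hne
    · simp [hg, ha, hb]
    · simp [hg, ha, hb]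
    · exact absurd (hq4 a (hmemq a ha) b (hmemq b hb) hab) hne
  rcases R.coloring_unique g f hgp hfp with hcase | hcase
  · -- g = f : the partitions agree
    have hq1eq : q1 = p₀.1 := by
      ext k
      simp only [hp₀, Finset.mem_filter, Finset.mem_univ, true_and]
      constructor
      · intro hk
        rw [← hcase k]
        simp [hg, hk]
      · intro hk
        have := hcase k
        rw [hk] at this
        simpa [hg] using this
    have hq2eq : q2 = p₀.2 := by
      ext k
      simp only [hp₀, Finset.mem_filter, Finset.mem_univ, true_and]
      constructor
      · intro hk
        have hk1 : k ∉ q1 := fun h1 => hnotboth k h1 hk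
        have := hcase k
        have hgk : g k = false := by simp [hg, hk1]
        rw [hgk] at this
        cases hfk : f k
        · rfl
        · rw [hfk] at this; exact absurd this (by simp)
      · intro hk
        apply hmemq
        intro h1
        have := hcase k
        rw [hk] at this
        simp [hg, h1] at this
    rw [hp₀]
    exact Prod.ext hq1eq hq2eq
  · -- g = !f : impossible since i0 would lie in q2
    exfalso
    have hgi0 : g i0 = false := by
      have := hcase i0
      rw [hfi0] at this
      simpa using this
    have hi0q2 : i0 ∈ q2 := by
      apply hmemq
      intro h1
      simp [hg, h1] at hgi0
    exact hi0 (hq5 i0 hi0q2)
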